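/- Let Z be a compact Hausdorff topological space, let u₁, u₂ be unitary matrices indexed by Fin n × Fin k over ℂ, let x, x' : Fin k → Z with x injective, and let μ be a permutation of Fin k such that x(s) = x'(μ(s)) for all s ∈ Fin k. Suppose that for every continuous function f : Z → M_n(ℂ) one has u₁·(Σ_{s} f(x(s)) ⊗ E_s)·u₁⋆ = u₂·(Σ_{s} f(x'(s)) ⊗ E_s)·u₂⋆. Then: (i) for every s ∈ Fin k, u₁·(1 ⊗ E_s)·u₁⋆ = u₂·(1 ⊗ E_{μ(s)})·u₂⋆; and (ii) for every c ∈ M_n(ℂ), u₁·(c ⊗ 1)·u₁⋆ = u₂·(c ⊗ 1)·u₂⋆. -/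

import Mathlib

open Kronecker

/-- If `u₁ · (Σ_s f(x(s)) ⊗ E_s) · u₁⋆ = u₂ · (Σ_s f(x'(s)) ⊗ E_s) · u₂⋆`
for all continuous `f : Z → M_n(ℂ)`, where `x` is injective and
`x(s) = x'(μ(s))`, then the conjugated rank-one diagonal projections and the
conjugated constant blocks agree. -/
theorem stmt_3 (Z : Type*) [TopologicalSpace Z] [CompactSpace Z] [T2Space Z]
    (n k : ℕ)
    (u₁ u₂ : Matrix (Fin n × Fin k) (Fin n × Fin k) ℂ)
    (hu₁ : u₁ ∈ Matrix.unitaryGroup (Fin n × Fin k) ℂ)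
    (hu₂ : u₂ ∈ Matrix.unitaryGroup (Fin n × Fin k) ℂ)
    (x x' : Fin k → Z) (hx : Function.Injective x)
    (μ : Equiv.Perm (Fin k)) (hμ : ∀ s, x s = x' (μ s))
    (h : ∀ f : C(Z, Matrix (Fin n) (Fin n) ℂ),
      u₁ * (∑ s, (f (x s)) ⊗ₖ Matrix.single s s (1 : ℂ)) * star u₁
        = u₂ * (∑ s, (f (x' s)) ⊗ₖ Matrix.single s s (1 : ℂ)) * star u₂) :
    (∀ s : Fin k,
      u₁ * ((1 : Matrix (Fin n) (Fin n) ℂ) ⊗ₖ Matrix.single s s (1 : ℂ)) * star u₁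
        = u₂ * ((1 : Matrix (Fin n) (Fin n) ℂ) ⊗ₖ Matrix.single (μ s) (μ s) (1 : ℂ)) * star u₂) ∧
    (∀ c : Matrix (Fin n) (Fin n) ℂ,
      u₁ * (c ⊗ₖ (1 : Matrix (Fin k) (Fin k) ℂ)) * star u₁
        = u₂ * (c ⊗ₖ (1 : Matrix (Fin k) (Fin k) ℂ)) * star u₂) := by
  classical
  rcases Nat.eq_zero_or_pos n with hn | hn
  · subst hn
    constructor
    · intro s
      apply Matrix.ext; rintro ⟨i, _⟩; exact i.elim0
    · intro c
      apply Matrix.ext; rintro ⟨i, _⟩; exact i.elim0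
  constructor
  · -- part (i)
    intro s
    -- construct a continuous function which is 1 at x s and 0 at the other relevant points
    set B : Set Z := (x '' {r | r ≠ s}) ∪ (x' '' {t | x' t ≠ x s}) with hB
    have hBfin : B.Finite := ((Set.toFinite _).image x).union ((Set.toFinite _).image x')
    have hBclosed : IsClosed B := hBfin.isClosed
    have hAclosed : IsClosed ({x s} : Set Z) := isClosed_singleton
    have hdisj : Disjoint B ({x s} : Set Z) := by
      rw [Set.disjoint_singleton_right]
      rintro (⟨r, hr, hrx⟩ | ⟨t, ht, htx⟩)
      · exact hr (hx hrx)
      · exact ht htx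
    obtain ⟨g, hg0, hg1, _⟩ := exists_continuous_zero_one_of_isClosed hBclosed hAclosed hdisj
    let f : C(Z, Matrix (Fin n) (Fin n) ℂ) :=
      ⟨fun z => ((g z : ℂ)) • (1 : Matrix (Fin n) (Fin n) ℂ), by fun_prop⟩
    have hfx : ∀ r : Fin k, f (x r) = if r = s then 1 else 0 := by
      intro r
      by_cases hr : r = s
      · subst hr
        have : g (x r) = 1 := hg1 rfl
        simp [f, this]
      · have : g (x r) = 0 := hg0 (Or.inl ⟨r, hr, rfl⟩)
        simp [f, this, hr]
    have hfx' : ∀ t : Fin k, f (x' t) = if x' t = x s then 1 else 0 := by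
      intro t
      by_cases ht : x' t = x s
      · have hg : g (x s) = 1 := hg1 rfl
        simp [f, ht, hg]
      · have : g (x' t) = 0 := hg0 (Or.inr ⟨t, ht, rfl⟩)
        simp [f, this, ht]
    have key := h f
    have hL : (∑ r, (f (x r)) ⊗ₖ Matrix.single r r (1 : ℂ))
        = (1 : Matrix (Fin n) (Fin n) ℂ) ⊗ₖ Matrix.single s s (1 : ℂ) := by
      rw [Finset.sum_congr rfl (fun r _ => by rw [hfx r])]
      rw [Finset.sum_congr rfl (fun r _ => by
        rw [show ((if r = s then (1 : Matrix (Fin n) (Fin n) ℂ) else 0) ⊗ₖ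
              Matrix.single r r (1 : ℂ))
            = if r = s then (1 : Matrix (Fin n) (Fin n) ℂ) ⊗ₖ Matrix.single r r (1 : ℂ)
              else 0 by
          split <;> simp [Matrix.zero_kronecker]])]
      simp
    -- the set of t with x' t = x s
    set T : Finset (Fin k) := Finset.univ.filter (fun t => x' t = x s) with hT
    have hR : (∑ t, (f (x' t)) ⊗ₖ Matrix.single t t (1 : ℂ))
        = ∑ t ∈ T, (1 : Matrix (Fin n) (Fin n) ℂ) ⊗ₖ Matrix.single t t (1 : ℂ) := by
      rw [Finset.sum_congr rfl (fun t _ => by rw [hfx' t])]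
      rw [Finset.sum_congr rfl (fun t _ => by
        rw [show ((if x' t = x s then (1 : Matrix (Fin n) (Fin n) ℂ) else 0) ⊗ₖ
              Matrix.single t t (1 : ℂ))
            = if x' t = x s then
                (1 : Matrix (Fin n) (Fin n) ℂ) ⊗ₖ Matrix.single t t (1 : ℂ)
              else 0 by
          split <;> simp [Matrix.zero_kronecker]])]
      rw [Finset.sum_ite, Finset.sum_const_zero, add_zero]
    rw [hL, hR] at key
    have hμs : μ s ∈ T := by
      simp only [hT, Finset.mem_filter, Finset.mem_univ, true_and]
      exact (hμ s).symm
    -- trace argument: T has exactly one element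
    have htr : ((n : ℂ)) = (n : ℂ) * T.card := by
      have e1 : (u₁ * ((1 : Matrix (Fin n) (Fin n) ℂ) ⊗ₖ Matrix.single s s (1 : ℂ))
          * star u₁).trace = (n : ℂ) := by
        rw [Matrix.trace_mul_cycle, hu₁.1, one_mul, Matrix.trace_kronecker,
          Matrix.trace_single_eq_same]
        simp
      have e2 : (u₂ * (∑ t ∈ T, (1 : Matrix (Fin n) (Fin n) ℂ) ⊗ₖ
            Matrix.single t t (1 : ℂ)) * star u₂).trace = (n : ℂ) * T.card := by
        rw [Matrix.trace_mul_cycle, hu₂.1, one_mul, Matrix.trace_sum]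
        rw [Finset.sum_congr rfl (fun t _ => by
          rw [Matrix.trace_kronecker, Matrix.trace_single_eq_same])]
        simp [mul_comm]
      have h3 := congrArg Matrix.trace key
      rw [e1, e2] at h3
      exact h3
    have hcard : T.card = 1 := by
      have hn' : (n : ℂ) ≠ 0 := Nat.cast_ne_zero.mpr hn.ne'
      have := mul_left_cancel₀ hn' (by rw [← htr, mul_one] : (n : ℂ) * 1 = (n : ℂ) * T.card)
      exact_mod_cast this.symm
    obtain ⟨a, ha⟩ := Finset.card_eq_one.mp hcard
    have haμ : a = μ s := by
      rw [ha, Finset.mem_singleton] at hμs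
      exact hμs.symm
    rw [ha, haμ, Finset.sum_singleton] at key
    exact key
  · -- part (ii): use the constant function c
    intro c
    have key := h ⟨fun _ => c, continuous_const⟩
    have hsum : ∀ y : Fin k → Z, (∑ t, (c ⊗ₖ Matrix.single t t (1 : ℂ)))
        = c ⊗ₖ (1 : Matrix (Fin k) (Fin k) ℂ) := by
      intro y
      ext ⟨i, j⟩ ⟨i', j'⟩
      simp only [Matrix.sum_apply, Matrix.kroneckerMap_apply, Matrix.one_apply,
        Matrix.single]
      rw [← Finset.mul_sum]
      by_cases h2 : j = j'
      · subst h2; simp [Matrix.of_apply]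
      · simp only [Matrix.of_apply, h2, if_false, mul_comm]
        have : ∀ t : Fin k, (if t = j ∧ t = j' then (1:ℂ) else 0) = 0 := by
          intro t
          rw [if_neg]
          rintro ⟨h3, h4⟩; exact h2 (h3 ▸ h4)
        simp [this]
    simpa [hsum x] using key
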